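/- In the graph C_{3k+1}, distinct vertices have distinct neighborhoods; that is, the graph is twin-free. -/

import Mathlib

/-- The graph `C_{3k+1}`: vertices are vectors in `(Z/2)^{3k+1}`,
adjacent iff their Hamming distance is at least `2k+1`. -/
def hypercubeGraph (k : ℕ) : SimpleGraph (Fin (3 * k + 1) → ZMod 2) where
  Adj x y := 2 * k + 1 ≤ hammingDist x y
  symm := ⟨by intro x y h; rwa [hammingDist_comm]⟩
  loopless := ⟨by intro x h; rw [hammingDist_self] at h; omega⟩

theorem stmt_3 (k : ℕ) (hk : 0 < k) (x y : Fin (3 * k + 1) → ZMod 2)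
    (h : (hypercubeGraph k).neighborSet x = (hypercubeGraph k).neighborSet y) :
    x = y := by
  by_contra hxy
  have hzmod : ∀ a : ZMod 2, a + 1 ≠ a := by decide
  have hd1 : 0 < hammingDist x y := hammingDist_pos.mpr hxy
  set d := hammingDist x y with hd
  have hdle : d ≤ 3 * k + 1 := by
    simpa using (hammingDist_le_card_fintype (x := x) (y := y))
  by_cases hbig : 2 * k + 1 ≤ d
  · have hy : y ∈ (hypercubeGraph k).neighborSet x := hbig
    rw [h] at hy
    exact (hypercubeGraph k).loopless.irrefl y hy
  · push_neg at hbig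
    set A : Finset (Fin (3 * k + 1)) := {i | x i ≠ y i} with hA
    have hAcard : A.card = d := rfl
    have hAcc : Aᶜ.card = 3 * k + 1 - d := by
      rw [Finset.card_compl, hAcard]; simp
    have hm : 2 * k + 1 - d ≤ Aᶜ.card := by omega
    obtain ⟨S, hSsub, hScard⟩ := Finset.exists_subset_card_eq hm
    set z : Fin (3 * k + 1) → ZMod 2 := fun i => if i ∈ S then x i + 1 else y i with hz
    have hSA : ∀ i ∈ S, x i = y i := by
      intro i hi
      have := hSsub hi
      simp [hA, Finset.mem_compl] at this
      exact this
    have hxz : hammingDist x z = 2 * k + 1 := by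
      have hset : ({i | x i ≠ z i} : Finset (Fin (3 * k + 1))) = A ∪ S := by
        ext i
        by_cases hiS : i ∈ S
        · simp [hz, hiS, hzmod, (hzmod (x i)).symm, hA]
        · simp [hz, hiS, hA]
      rw [hammingDist, hset, Finset.card_union_of_disjoint, hAcard, hScard]
      · omega
      · exact Finset.disjoint_left.mpr fun i hiA hiS => by simp [hA] at hiA; exact hiA (hSA i hiS)
    have hyz : hammingDist y z = 2 * k + 1 - d := by
      have hset : ({i | y i ≠ z i} : Finset (Fin (3 * k + 1))) = S := by
        ext i
        by_cases hiS : i ∈ S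
        · have := hSA i hiS
          simp [hz, hiS, this, (hzmod (y i)).symm]
        · simp [hz, hiS]
      rw [hammingDist, hset, hScard]
    have hzx : z ∈ (hypercubeGraph k).neighborSet x := by
      show 2 * k + 1 ≤ hammingDist x z
      omega
    rw [h] at hzx
    have : 2 * k + 1 ≤ hammingDist y z := hzx
    omega
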